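/- Let $\mathcal{O}$ be the ring of integers of a nonarchimedean local field with maximal ideal $\mathfrak{p}$, uniformiser $\varpi$, $n \geq 2$, and $m \geq 0$. Then $\mathrm{GL}_n(\mathcal{O}) = \bigsqcup_{\ell=0}^{m} K_0(\mathfrak{p}^m) \begin{pmatrix} 1_{n-1} & 0 \\ \varpi^{\ell} e_{n-1} & 1 \end{pmatrix} K_0(\mathfrak{p}^m)$, i.e., the double cosets of $K_0(\mathfrak{p}^m)$ in $\mathrm{GL}_n(\mathcal{O})$ are represented exactly once by the matrices $\begin{pmatrix} 1_{n-1} & 0 \\ \varpi^{\ell} e_{n-1} & 1 \end{pmatrix}$ for $\ell \in \{0,\ldots,m\}$. -/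

import Mathlib

open Matrix IsLocalRing

lemma aux_sq_unit {R : Type*} [Ring R] (u : R) (h : u * u = 0) :
    (1 + u) * (1 - u) = 1 ∧ (1 - u) * (1 + u) = 1 := by
  constructor
  · rw [mul_sub, mul_one, add_mul, one_mul, h, add_zero]; abel
  · rw [sub_mul, one_mul, mul_add, mul_one, h, add_zero]; abel

lemma aux_det_unit {R : Type*} [CommRing R] {n : ℕ}
    (M : (Matrix (Fin n) (Fin n) R)ˣ) : IsUnit M.val.det :=
  (Matrix.isUnit_iff_isUnit_det M.val).mp M.isUnit

lemma aux_row_unit {R : Type*} [CommRing R] [IsLocalRing R] {n : ℕ}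
    (M : (Matrix (Fin n) (Fin n) R)ˣ) (i : Fin n) : ∃ j, IsUnit (M.val i j) := by
  by_contra h
  push_neg at h
  have hmem : ∀ j, M.val i j ∈ maximalIdeal R := fun j => (mem_maximalIdeal _).2 (h j)
  have h1 : IsUnit ((residue R) M.val.det) := (aux_det_unit M).map _
  rw [RingHom.map_det] at h1
  have h0 : ((residue R).mapMatrix M.val).det = 0 := by
    apply Matrix.det_eq_zero_of_row_eq_zero i
    intro j
    simpa [RingHom.mapMatrix_apply, Ideal.Quotient.eq_zero_iff_mem] using hmem j
  rw [h0] at h1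
  exact h1.ne_zero rfl

lemma aux_E_mul {R : Type*} [CommRing R] {n : ℕ} (r s : Fin n) (a : R)
    (B : Matrix (Fin n) (Fin n) R) (i j : Fin n) :
    (Matrix.single r s a * B) i j = if i = r then a * B s j else 0 := by
  rw [Matrix.mul_apply]
  by_cases h : i = r
  · subst h
    rw [Finset.sum_eq_single s]
    · simp [Matrix.single]
    · intro k _ hk; simp [Matrix.single, Ne.symm hk]
    · simp
  · rw [if_neg h]
    apply Finset.sum_eq_zero
    intro k _
    simp [Matrix.single]
    intro hh
    exact absurd hh.symm h

lemma aux_mul_E {R : Type*} [CommRing R] {n : ℕ} (r s : Fin n) (a : R)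
    (B : Matrix (Fin n) (Fin n) R) (i j : Fin n) :
    (B * Matrix.single r s a) i j = if j = s then B i r * a else 0 := by
  rw [Matrix.mul_apply]
  by_cases h : j = s
  · subst h
    rw [Finset.sum_eq_single r]
    · simp [Matrix.single]
    · intro k _ hk; simp [Matrix.single, Ne.symm hk]
    · simp
  · rw [if_neg h]
    apply Finset.sum_eq_zero
    intro k _
    simp [Matrix.single]
    intro _ hh
    exact absurd hh.symm h

lemma aux_exist {𝒪 : Type*} [CommRing 𝒪] [IsDomain 𝒪] [IsDiscreteValuationRing 𝒪]
    (ϖ : 𝒪) (hϖ : Irreducible ϖ) {n m : ℕ} {r s : Fin n} (hsr : s ≠ r)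
    (g : (Matrix (Fin n) (Fin n) 𝒪)ˣ) :
    ∃ ℓ : ℕ, ℓ ≤ m ∧ ∃ k₁ k₂ : (Matrix (Fin n) (Fin n) 𝒪)ˣ,
      (∀ j, j ≠ r → k₁.val r j ∈ maximalIdeal 𝒪 ^ m) ∧
      (∀ j, j ≠ r → k₂.val r j ∈ maximalIdeal 𝒪 ^ m) ∧
      g.val = k₁.val * (1 + Matrix.single r s (ϖ ^ ℓ)) * k₂.val := by
  set p := maximalIdeal 𝒪 with hp
  have hϖp : ϖ ∈ p := (mem_maximalIdeal ϖ).2 hϖ.not_isUnit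
  by_cases hm : ∀ j, j ≠ r → g.val r j ∈ p ^ m
  -- Case ℓ = m : g itself is in K₀
  · set E := Matrix.single r s (ϖ ^ m) with hE
    have hEE : E * E = 0 := by simp [hE, hsr]
    set Tu : (Matrix (Fin n) (Fin n) 𝒪)ˣ :=
      ⟨1 + E, 1 - E, (aux_sq_unit E hEE).1, (aux_sq_unit E hEE).2⟩ with hTu
    refine ⟨m, le_refl m, g * Tu⁻¹, 1, ?_, ?_, ?_⟩
    · intro j hj
      have hval : (g * Tu⁻¹).val r j = g.val r j - (if j = s then g.val r r * ϖ ^ m else 0) := by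
        rw [Units.val_mul]
        show (g.val * (1 - E)) r j = _
        rw [mul_sub, mul_one, Matrix.sub_apply, hE, aux_mul_E]
      rw [hval]
      refine sub_mem (hm j hj) ?_
      by_cases hjs : j = s
      · rw [if_pos hjs]
        exact Ideal.mul_mem_left _ _ (Ideal.pow_mem_pow hϖp m)
      · rw [if_neg hjs]; exact zero_mem _
    · intro j hj
      rw [Units.val_one]
      rw [Matrix.one_apply_ne (Ne.symm hj)]
      exact zero_mem _
    · have hfin : (g * Tu⁻¹) * Tu * 1 = g := by group
      calc g.val = ((g * Tu⁻¹) * Tu * 1).val := by rw [hfin]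
        _ = (g * Tu⁻¹).val * (1 + E) * (1 : (Matrix (Fin n) (Fin n) 𝒪)ˣ).val := by
            rw [Units.val_mul, Units.val_mul]
  -- Case ℓ < m
  · classical
    have hQ : ∃ k, ¬∀ j, j ≠ r → g.val r j ∈ p ^ k := ⟨m, hm⟩
    have hne0 : Nat.find hQ ≠ 0 := by
      intro h0
      have := Nat.find_spec hQ
      rw [h0] at this
      exact this (fun j _ => by rw [pow_zero, Ideal.one_eq_top]; exact Submodule.mem_top)
    set ℓ := Nat.find hQ - 1 with hℓdef
    have hℓ1 : ℓ + 1 = Nat.find hQ := by omega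
    have hℓmem : ∀ j, j ≠ r → g.val r j ∈ p ^ ℓ :=
      not_not.1 (Nat.find_min hQ (show ℓ < Nat.find hQ by omega))
    have hwit : ∃ j, j ≠ r ∧ g.val r j ∉ p ^ (ℓ + 1) := by
      have hh := Nat.find_spec hQ
      rw [← hℓ1] at hh
      push_neg at hh
      exact hh
    have hℓm : ℓ + 1 ≤ m := hℓ1 ▸ Nat.find_le hm
    obtain ⟨j₀, hj₀r, hj₀⟩ := hwit
    have hspan : p ^ ℓ = Ideal.span {ϖ ^ ℓ} := by
      rw [hp, hϖ.maximalIdeal_eq, Ideal.span_singleton_pow]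
    have hdvd : ∀ j, j ≠ r → ϖ ^ ℓ ∣ g.val r j := by
      intro j hj
      exact Ideal.mem_span_singleton.1 (hspan ▸ hℓmem j hj)
    set b : Fin n → 𝒪 := fun j =>
      if hj : j = r then g.val r r - 1 else (hdvd j hj).choose with hbdef
    have hb : ∀ j (hj : j ≠ r), g.val r j = ϖ ^ ℓ * b j := by
      intro j hj
      rw [hbdef]
      simp only [dif_neg hj]
      exact (hdvd j hj).choose_spec
    have hbr : b r = g.val r r - 1 := by rw [hbdef]; simp
    -- b j₀ is a unit
    have hbu : IsUnit (b j₀) := by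
      by_contra hnu
      apply hj₀
      have hϖdvd : ϖ ∣ b j₀ := by
        rw [← Ideal.mem_span_singleton, ← hϖ.maximalIdeal_eq]
        exact (mem_maximalIdeal _).2 hnu
      have : ϖ ^ (ℓ + 1) ∣ g.val r j₀ := by
        rw [hb j₀ hj₀r, pow_succ]
        exact mul_dvd_mul_left _ hϖdvd
      rw [hp, hϖ.maximalIdeal_eq, Ideal.span_singleton_pow, Ideal.mem_span_singleton]
      exact this
    -- y is a unit
    have hy : IsUnit (g.val r r - ϖ ^ ℓ * b r) := by
      rcases Nat.eq_zero_or_pos ℓ with h0 | hpos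
      · have : g.val r r - ϖ ^ ℓ * b r = 1 := by rw [h0, pow_zero, one_mul, hbr]; ring
        rw [this]; exact isUnit_one
      · have hplp : p ^ ℓ ≤ p := by
          have h := Ideal.pow_le_pow_right (I := p) hpos
          rwa [pow_one] at h
        have hdu : IsUnit (g.val r r) := by
          by_contra hnd
          obtain ⟨j, hju⟩ := aux_row_unit g r
          by_cases hjr : j = r
          · rw [hjr] at hju; exact hnd hju
          · exact ((mem_maximalIdeal _).1 (hplp (hℓmem j hjr))) hju
        by_contra hny
        have hymem : g.val r r - ϖ ^ ℓ * b r ∈ p := (mem_maximalIdeal _).2 hny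
        have hϖl : ϖ ^ ℓ * b r ∈ p :=
          Ideal.mul_mem_right _ _ (hplp (Ideal.pow_mem_pow hϖp ℓ))
        have : g.val r r ∈ p := by
          have := add_mem hymem hϖl
          simpa using this
        exact ((mem_maximalIdeal _).1 this) hdu
    -- the permutation and the explicit matrices
    set σ : Equiv.Perm (Fin n) := Equiv.swap j₀ s with hσdef
    have hσr : σ r = r := Equiv.swap_apply_of_ne_of_ne (Ne.symm hj₀r) (Ne.symm hsr)
    have hσσ : ∀ j, σ (σ j) = j := fun j => Equiv.swap_apply_self j₀ s j
    set bu := hbu.unit with hbudef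
    set yu := hy.unit with hyudef
    set dvec : Fin n → 𝒪 := fun i =>
      if i = r then g.val r r - ϖ ^ ℓ * b r else if i = s then b j₀ else 1 with hdvec
    set dvec' : Fin n → 𝒪 := fun i =>
      if i = r then (↑yu⁻¹ : 𝒪) else if i = s then (↑bu⁻¹ : 𝒪) else 1 with hdvec'
    have hDD : ∀ i, dvec i * dvec' i = 1 := by
      intro i
      simp only [hdvec, hdvec']
      by_cases hir : i = r
      · rw [if_pos hir, if_pos hir, ← hy.unit_spec, ← hyudef, Units.mul_inv]
      · rw [if_neg hir, if_neg hir]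
        by_cases his : i = s
        · rw [if_pos his, if_pos his, ← hbu.unit_spec, ← hbudef, Units.mul_inv]
        · rw [if_neg his, if_neg his, one_mul]
    have hD1 : Matrix.diagonal dvec * Matrix.diagonal dvec' = 1 := by
      rw [Matrix.diagonal_mul_diagonal,
        show (fun i => dvec i * dvec' i) = fun _ => (1 : 𝒪) from funext hDD,
        Matrix.diagonal_one]
    have hD2 : Matrix.diagonal dvec' * Matrix.diagonal dvec = 1 := by
      rw [Matrix.diagonal_mul_diagonal,
        show (fun i => dvec' i * dvec i) = fun _ => (1 : 𝒪) from
          funext (fun i => by rw [mul_comm]; exact hDD i),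
        Matrix.diagonal_one]
    set Du : (Matrix (Fin n) (Fin n) 𝒪)ˣ :=
      ⟨Matrix.diagonal dvec, Matrix.diagonal dvec', hD1, hD2⟩ with hDu
    set u : Matrix (Fin n) (Fin n) 𝒪 :=
      Matrix.of fun i j => if i = s ∧ j ≠ s then (↑bu⁻¹ : 𝒪) * b (σ j) else 0 with hu
    have huu : u * u = 0 := by
      ext i j
      rw [Matrix.mul_apply, Matrix.zero_apply]
      apply Finset.sum_eq_zero
      intro k _
      by_cases h1 : i = s ∧ k ≠ s
      · have h2 : ¬(k = s ∧ j ≠ s) := fun h => h1.2 h.1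
        simp [hu, h2]
      · simp [hu, h1]
    set Nu : (Matrix (Fin n) (Fin n) 𝒪)ˣ :=
      ⟨1 + u, 1 - u, (aux_sq_unit u huu).1, (aux_sq_unit u huu).2⟩ with hNu
    set P : Matrix (Fin n) (Fin n) 𝒪 :=
      Matrix.of fun i j => if σ i = j then 1 else 0 with hP
    have hPP : P * P = 1 := by
      ext i j
      rw [Matrix.mul_apply]
      rw [Finset.sum_eq_single (σ i)]
      · show (if σ i = σ i then (1:𝒪) else 0) * (if σ (σ i) = j then 1 else 0) = _
        rw [if_pos rfl, one_mul, hσσ, Matrix.one_apply]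
      · intro k _ hk
        show (if σ i = k then (1:𝒪) else 0) * _ = 0
        rw [if_neg (Ne.symm hk), zero_mul]
      · intro h
        exact absurd (Finset.mem_univ _) h
    set Pu : (Matrix (Fin n) (Fin n) 𝒪)ˣ := ⟨P, P, hPP, hPP⟩ with hPu
    set E := Matrix.single r s (ϖ ^ ℓ) with hE
    have hEE : E * E = 0 := by simp [hE, hsr]
    set Tu : (Matrix (Fin n) (Fin n) 𝒪)ˣ :=
      ⟨1 + E, 1 - E, (aux_sq_unit E hEE).1, (aux_sq_unit E hEE).2⟩ with hTu
    set k₂u := Du * Nu * Pu with hk₂u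
    set k₁u := g * (Tu * k₂u)⁻¹ with hk₁u
    -- auxiliary row computations
    have hur : ∀ k, u r k = 0 := by
      intro k
      rw [hu]
      show (if r = s ∧ k ≠ s then _ else 0) = 0
      rw [if_neg (fun h => (Ne.symm hsr) h.1)]
    have hk2r : ∀ j, k₂u.val r j = if r = j then g.val r r - ϖ ^ ℓ * b r else 0 := by
      intro j
      have : k₂u.val = Matrix.diagonal dvec * ((1 + u) * P) := by
        rw [hk₂u, Units.val_mul, Units.val_mul, mul_assoc]
      rw [this, Matrix.diagonal_mul]
      have h2 : ((1 + u) * P) r j = if r = j then 1 else 0 := by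
        rw [add_mul, one_mul, Matrix.add_apply]
        have h3 : (u * P) r j = 0 := by
          rw [Matrix.mul_apply]
          apply Finset.sum_eq_zero
          intro k _
          rw [hur k, zero_mul]
        rw [h3, add_zero, hP]
        show (if σ r = j then (1:𝒪) else 0) = _
        rw [hσr]
      rw [h2]
      simp only [hdvec]
      by_cases hrj : r = j
      · rw [if_pos hrj, if_pos hrj, mul_one]
        simp
      · rw [if_neg hrj, if_neg hrj, mul_zero]
    have hk2s : ∀ j, k₂u.val s j = b j := by
      intro j
      have : k₂u.val = Matrix.diagonal dvec * ((1 + u) * P) := by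
        rw [hk₂u, Units.val_mul, Units.val_mul, mul_assoc]
      rw [this, Matrix.diagonal_mul]
      have hdvs : dvec s = b j₀ := by
        simp only [hdvec]
        rw [if_neg hsr]
        simp
      have huP : (u * P) s j = if σ j ≠ s then (↑bu⁻¹ : 𝒪) * b j else 0 := by
        rw [Matrix.mul_apply]
        rw [Finset.sum_eq_single (σ j)]
        · show u s (σ j) * (if σ (σ j) = j then (1:𝒪) else 0) = _
          rw [hσσ, if_pos rfl, mul_one, hu]
          show (if s = s ∧ σ j ≠ s then (↑bu⁻¹ : 𝒪) * b (σ (σ j)) else 0) = _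
          rw [hσσ]
          by_cases hjs : σ j ≠ s
          · rw [if_pos ⟨rfl, hjs⟩, if_pos hjs]
          · rw [if_neg (fun h => hjs h.2), if_neg hjs]
        · intro k _ hk
          show u s k * (if σ k = j then (1:𝒪) else 0) = 0
          have : σ k ≠ j := by
            intro h
            exact hk (by rw [← h, hσσ])
          rw [if_neg this, mul_zero]
        · intro h
          exact absurd (Finset.mem_univ _) h
      have hPsj : P s j = if j = j₀ then (1:𝒪) else 0 := by
        rw [hP]
        show (if σ s = j then (1:𝒪) else 0) = _
        have : σ s = j₀ := Equiv.swap_apply_right j₀ s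
        rw [this]
        by_cases h : j = j₀
        · rw [if_pos h.symm, if_pos h]
        · rw [if_neg (fun hh => h hh.symm), if_neg h]
      have hmain : ((1 + u) * P) s j = P s j + (u * P) s j := by
        rw [add_mul, one_mul, Matrix.add_apply]
      rw [hmain, huP, hPsj, hdvs]
      by_cases hj : j = j₀
      · have hσjs : σ j = s := by rw [hj, hσdef]; exact Equiv.swap_apply_left j₀ s
        rw [if_pos hj, if_neg (fun h => h hσjs), add_zero, mul_one, hj]
      · have hσjs : σ j ≠ s := by
          intro h
          apply hj
          rw [← hσσ j, h, hσdef]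
          exact Equiv.swap_apply_right j₀ s
        rw [if_neg hj, if_pos hσjs, zero_add, ← mul_assoc, ← hbu.unit_spec, ← hbudef,
          Units.mul_inv, one_mul]
    have hTk : ∀ j, (Tu.val * k₂u.val) r j = g.val r j := by
      intro j
      have h1 : Tu.val = 1 + E := rfl
      rw [h1, add_mul, one_mul, Matrix.add_apply, hE, aux_E_mul, if_pos rfl, hk2s, hk2r]
      by_cases hrj : r = j
      · rw [if_pos hrj, ← hrj]
        ring
      · rw [if_neg hrj, zero_add]
        exact (hb j (fun h => hrj h.symm)).symm
    have hk1row : ∀ j, k₁u.val r j = (1 : Matrix (Fin n) (Fin n) 𝒪) r j := by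
      intro j
      have h1 : k₁u.val = g.val * ((Tu * k₂u)⁻¹).val := by rw [hk₁u, Units.val_mul]
      rw [h1, Matrix.mul_apply]
      have h2 : ∀ k, g.val r k = (Tu * k₂u).val r k := by
        intro k
        rw [Units.val_mul]
        exact (hTk k).symm
      calc ∑ k, g.val r k * ((Tu * k₂u)⁻¹).val k j
          = ∑ k, (Tu * k₂u).val r k * ((Tu * k₂u)⁻¹).val k j := by
            exact Finset.sum_congr rfl (fun k _ => by rw [h2 k])
        _ = ((Tu * k₂u).val * ((Tu * k₂u)⁻¹).val) r j := by rw [Matrix.mul_apply]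
        _ = (1 : Matrix (Fin n) (Fin n) 𝒪) r j := by
            rw [← Units.val_mul, mul_inv_cancel, Units.val_one]
    refine ⟨ℓ, by omega, k₁u, k₂u, ?_, ?_, ?_⟩
    · intro j hj
      rw [hk1row j, Matrix.one_apply_ne (Ne.symm hj)]
      exact zero_mem _
    · intro j hj
      rw [hk2r j, if_neg (fun h => hj h.symm)]
      exact zero_mem _
    · have hfin : k₁u * Tu * k₂u = g := by rw [hk₁u]; group
      calc g.val = (k₁u * Tu * k₂u).val := by rw [hfin]
        _ = k₁u.val * (1 + E) * k₂u.val := by rw [Units.val_mul, Units.val_mul]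

lemma aux_two_rows {R : Type*} [CommRing R] [IsLocalRing R] {n : ℕ}
    (M : (Matrix (Fin n) (Fin n) R)ˣ) (r s : Fin n) (hrs : s ≠ r)
    (h1 : ∀ j, j ≠ r → M.val r j ∈ maximalIdeal R)
    (h2 : ∀ j, j ≠ r → M.val s j ∈ maximalIdeal R) : False := by
  set A : Matrix (Fin n) (Fin n) (ResidueField R) := (residue R).mapMatrix M.val with hA
  have hAr : ∀ j, j ≠ r → A r j = 0 := by
    intro j hj
    simpa [hA, RingHom.mapMatrix_apply, Ideal.Quotient.eq_zero_iff_mem] using h1 j hj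
  have hAs : ∀ j, j ≠ r → A s j = 0 := by
    intro j hj
    simpa [hA, RingHom.mapMatrix_apply, Ideal.Quotient.eq_zero_iff_mem] using h2 j hj
  have hdet : IsUnit A.det := by
    rw [hA, ← RingHom.map_det]; exact (aux_det_unit M).map _
  by_cases hsr : A s r = 0
  · have h0 : A.det = 0 := Matrix.det_eq_zero_of_row_eq_zero s (fun j => by
      by_cases hj : j = r
      · rw [hj]; exact hsr
      · exact hAs j hj)
    rw [h0] at hdet; exact hdet.ne_zero rfl
  · have hd := Matrix.det_updateRow_add_smul_self A (show r ≠ s from Ne.symm hrs)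
      (-(A r r) * (A s r)⁻¹)
    have h0 : (A.updateRow r (A r + (-(A r r) * (A s r)⁻¹) • A s)).det = 0 := by
      apply Matrix.det_eq_zero_of_row_eq_zero r
      intro j
      rw [Matrix.updateRow_self]
      by_cases hj : j = r
      · subst hj
        simp only [Pi.add_apply, Pi.smul_apply, smul_eq_mul]
        field_simp
        ring
      · simp [Pi.add_apply, Pi.smul_apply, hAr j hj, hAs j hj]
    rw [h0] at hd
    rw [← hd] at hdet
    exact hdet.ne_zero rfl


/-- Key invariance lemma: if `g = k₁ (1 + ϖ^ℓ E_{r,s}) k₂` then the last row of `g`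
has all its off-diagonal entries in `p^ℓ`, and (if `ℓ < m`) at least one outside `p^(ℓ+1)`. -/
lemma aux_key {𝒪 : Type*} [CommRing 𝒪] [IsDomain 𝒪] [IsDiscreteValuationRing 𝒪]
    (ϖ : 𝒪) (hϖ : Irreducible ϖ) {n m : ℕ} {r s : Fin n} (hsr : s ≠ r)
    (g k₁ k₂ : (Matrix (Fin n) (Fin n) 𝒪)ˣ) (ℓ : ℕ) (hlm : ℓ ≤ m)
    (hk₁ : ∀ j, j ≠ r → k₁.val r j ∈ maximalIdeal 𝒪 ^ m)
    (hk₂ : ∀ j, j ≠ r → k₂.val r j ∈ maximalIdeal 𝒪 ^ m)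
    (heq : g.val = k₁.val * (1 + Matrix.single r s (ϖ ^ ℓ)) * k₂.val) :
    (∀ j, j ≠ r → g.val r j ∈ maximalIdeal 𝒪 ^ ℓ) ∧
      (ℓ < m → ∃ j, j ≠ r ∧ g.val r j ∉ maximalIdeal 𝒪 ^ (ℓ + 1)) := by
  set p := maximalIdeal 𝒪 with hp
  have hϖp : ϖ ∈ p := (mem_maximalIdeal ϖ).2 hϖ.not_isUnit
  have hml : p ^ m ≤ p ^ ℓ := Ideal.pow_le_pow_right hlm
  set E := Matrix.single r s (ϖ ^ ℓ) with hE
  have hgrj : ∀ j, g.val r j = ∑ i, k₁.val r i * ((1 + E) * k₂.val) i j := by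
    intro j
    rw [heq, mul_assoc, Matrix.mul_apply]
  have hmid : ∀ j, ((1 + E) * k₂.val) r j = k₂.val r j + ϖ ^ ℓ * k₂.val s j := by
    intro j
    rw [add_mul, one_mul, Matrix.add_apply, hE, aux_E_mul, if_pos rfl]
  constructor
  · intro j hj
    rw [hgrj]
    apply Ideal.sum_mem
    intro i _
    by_cases hi : i = r
    · subst hi
      rw [hmid]
      exact Ideal.mul_mem_left _ _ (add_mem (hml (hk₂ j hj))
        (Ideal.mul_mem_right _ _ (Ideal.pow_mem_pow hϖp ℓ)))
    · exact Ideal.mul_mem_right _ _ (hml (hk₁ i hi))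
  · intro hlt
    by_contra hcon
    push_neg at hcon
    have hm1 : 1 ≤ m := by omega
    have hml1 : p ^ m ≤ p ^ (ℓ + 1) := Ideal.pow_le_pow_right (by omega)
    have hmp : p ^ m ≤ p := by
      have h := Ideal.pow_le_pow_right (I := p) hm1
      rwa [pow_one] at h
    have ha : IsUnit (k₁.val r r) := by
      obtain ⟨j, hju⟩ := aux_row_unit k₁ r
      by_cases hj : j = r
      · rwa [hj] at hju
      · exact absurd ((mem_maximalIdeal _).1 (hmp (hk₁ j hj))) (by simpa using hju)
    have hterm : ∀ j, j ≠ r → k₁.val r r * (ϖ ^ ℓ * k₂.val s j) ∈ p ^ (ℓ + 1) := by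
      intro j hj
      have hsum : k₁.val r r * ((1 + E) * k₂.val) r j
          + ∑ i ∈ Finset.univ.erase r, k₁.val r i * ((1 + E) * k₂.val) i j ∈ p ^ (ℓ + 1) := by
        rw [Finset.add_sum_erase Finset.univ
          (fun i => k₁.val r i * ((1 + E) * k₂.val) i j) (Finset.mem_univ r), ← hgrj j]
        exact hcon j hj
      have h1 : (∑ i ∈ Finset.univ.erase r, k₁.val r i * ((1 + E) * k₂.val) i j)
          ∈ p ^ (ℓ + 1) := by
        apply Ideal.sum_mem
        intro i hi
        exact Ideal.mul_mem_right _ _ (hml1 (hk₁ i (Finset.mem_erase.1 hi).1))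
      have h2 : k₁.val r r * k₂.val r j ∈ p ^ (ℓ + 1) :=
        Ideal.mul_mem_left _ _ (hml1 (hk₂ j hj))
      have h3 := sub_mem (sub_mem hsum h1) h2
      have : k₁.val r r * ((1 + E) * k₂.val) r j
          + ∑ i ∈ Finset.univ.erase r, k₁.val r i * ((1 + E) * k₂.val) i j
          - (∑ i ∈ Finset.univ.erase r, k₁.val r i * ((1 + E) * k₂.val) i j)
          - k₁.val r r * k₂.val r j = k₁.val r r * (ϖ ^ ℓ * k₂.val s j) := by
        rw [hmid]; ring
      rwa [this] at h3
    have hk2s : ∀ j, j ≠ r → k₂.val s j ∈ p := by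
      intro j hj
      have h4 : ϖ ^ ℓ * k₂.val s j ∈ p ^ (ℓ + 1) :=
        (Ideal.unit_mul_mem_iff_mem _ ha).1 (hterm j hj)
      rw [hp, hϖ.maximalIdeal_eq, Ideal.span_singleton_pow, Ideal.mem_span_singleton] at h4
      rw [hp, hϖ.maximalIdeal_eq, Ideal.mem_span_singleton]
      rw [pow_succ] at h4
      exact (mul_dvd_mul_iff_left (pow_ne_zero ℓ hϖ.ne_zero)).1 h4
    have hk2r : ∀ j, j ≠ r → k₂.val r j ∈ p := fun j hj => hmp (hk₂ j hj)
    exact aux_two_rows k₂ r s hsr hk2r hk2s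


/-- Double coset decomposition: `GL_n(𝒪) = ⨆_{ℓ=0}^{m} K₀(𝔭^m) (1 0; ϖ^ℓ e_{n-1} 1) K₀(𝔭^m)`,
with each double coset appearing exactly once: every `g ∈ GL_n(𝒪)` lies in exactly one of the
double cosets of the matrices `1 + ϖ^ℓ E_{n,n-1}` for `0 ≤ ℓ ≤ m`. -/
theorem stmt6 (𝒪 : Type*) [CommRing 𝒪] [IsDomain 𝒪] [IsDiscreteValuationRing 𝒪]
    (ϖ : 𝒪) (hϖ : Irreducible ϖ)
    (n m : ℕ) (hn : 2 ≤ n)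
    (K₀ : Set (GL (Fin n) 𝒪))
    (hK₀ : ∀ k : GL (Fin n) 𝒪, k ∈ K₀ ↔
      ∀ j : Fin n, j ≠ (⟨n - 1, by omega⟩ : Fin n) →
        (k : Matrix (Fin n) (Fin n) 𝒪) (⟨n - 1, by omega⟩ : Fin n) j
          ∈ IsLocalRing.maximalIdeal 𝒪 ^ m)
    (g : GL (Fin n) 𝒪) :
    ∃! ℓ : ℕ, ℓ ≤ m ∧ ∃ k₁ ∈ K₀, ∃ k₂ ∈ K₀,
      (g : Matrix (Fin n) (Fin n) 𝒪) =
        (k₁ : Matrix (Fin n) (Fin n) 𝒪) *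
          ((1 : Matrix (Fin n) (Fin n) 𝒪) +
            Matrix.single (⟨n - 1, by omega⟩ : Fin n) (⟨n - 2, by omega⟩ : Fin n)
              (ϖ ^ ℓ)) *
          (k₂ : Matrix (Fin n) (Fin n) 𝒪) := by
  have hr1 : n - 1 < n := by omega
  have hs1 : n - 2 < n := by omega
  set r : Fin n := ⟨n - 1, hr1⟩ with hrdef
  set s : Fin n := ⟨n - 2, hs1⟩ with hsdef
  have hsr : s ≠ r := by
    rw [hrdef, hsdef, Ne, Fin.mk_eq_mk]
    omega
  obtain ⟨ℓ, hℓm, k₁, k₂, hm1, hm2, heq⟩ :=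
    aux_exist ϖ hϖ (m := m) (r := r) (s := s) hsr g
  refine ⟨ℓ, ⟨hℓm, k₁, ?_, k₂, ?_, heq⟩, ?_⟩
  · exact (hK₀ k₁).2 hm1
  · exact (hK₀ k₂).2 hm2
  · rintro ℓ' ⟨hℓ'm, k₁', hk₁', k₂', hk₂', heq'⟩
    have h1 := aux_key ϖ hϖ hsr g k₁ k₂ ℓ hℓm hm1 hm2 heq
    have h2 := aux_key ϖ hϖ hsr g k₁' k₂' ℓ' hℓ'm
      ((hK₀ k₁').1 hk₁') ((hK₀ k₂').1 hk₂') heq'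
    rcases lt_trichotomy ℓ' ℓ with h | h | h
    · obtain ⟨j, hjr, hj⟩ := h2.2 (by omega)
      exact absurd (Ideal.pow_le_pow_right (show ℓ' + 1 ≤ ℓ by omega) (h1.1 j hjr)) hj
    · exact h
    · obtain ⟨j, hjr, hj⟩ := h1.2 (by omega)
      exact absurd (Ideal.pow_le_pow_right (show ℓ + 1 ≤ ℓ' by omega) (h2.1 j hjr)) hj
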